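/- Let C be an (n,k,r,2)-SLRC over a finite field F, with 2 ≤ r < k. Then the code rate satisfies k/n ≤ r/(r+2), equivalently n ≥ k + 2k/r. -/

import Mathlib

open Finset Module

noncomputable def dotB (F : Type*) [Field F] (n : ℕ) : LinearMap.BilinForm F (Fin n → F) :=
  LinearMap.mk₂ F (fun v w => ∑ i, v i * w i)
    (fun a b c => by simp [add_mul, Finset.sum_add_distrib])
    (fun t a b => by simp [Finset.mul_sum, mul_assoc])
    (fun a b c => by simp [mul_add, Finset.sum_add_distrib])
    (fun t a b => by simp [Finset.mul_sum, mul_left_comm])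

lemma dotB_apply {F : Type*} [Field F] {n : ℕ} (v w : Fin n → F) :
    dotB F n v w = ∑ i, v i * w i := rfl

lemma dotB_refl {F : Type*} [Field F] {n : ℕ} : (dotB F n).IsRefl := by
  intro x y h
  rw [dotB_apply] at h ⊢
  rw [← h]
  exact Finset.sum_congr rfl fun i _ => mul_comm _ _

lemma dotB_nondeg {F : Type*} [Field F] {n : ℕ} : (dotB F n).Nondegenerate := by
  refine (LinearMap.IsRefl.nondegenerate_iff_separatingLeft (fun x y => dotB_refl x y)).2 ?_
  intro x hx
  funext i
  have := hx (Pi.single i 1)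
  rw [dotB_apply] at this
  simpa [Pi.single_apply, mul_ite, Finset.sum_ite_eq'] using this
def IsRecoveringSet {F : Type*} [Field F] {ι : Type*} [Fintype ι] [DecidableEq ι]
    (C : Submodule F (ι → F)) (i : ι) (R : Finset ι) : Prop :=
  i ∉ R ∧ ∃ a : ι → F, (∀ j ∈ R, a j ≠ 0) ∧ ∀ x ∈ C, x i = ∑ j ∈ R, a j * x j

def IsSLRC {F : Type*} [Field F] {ι : Type*} [Fintype ι] [DecidableEq ι]
    (C : Submodule F (ι → F)) (r t : ℕ) : Prop :=
  ∀ E : Finset ι, E.card ≤ t →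
    ∃ L : List ι, L.Nodup ∧ L.toFinset = E ∧
      ∀ ℓ : Fin L.length, ∃ R : Finset ι,
        IsRecoveringSet C (L.get ℓ) R ∧ R.card ≤ r ∧
        R ⊆ Eᶜ ∪ (L.take ℓ.1).toFinset

lemma slrc_single {F : Type*} [Field F] {n r : ℕ} {C : Submodule F (Fin n → F)}
    (hC : IsSLRC C r 2) (i : Fin n) :
    ∃ R, IsRecoveringSet C i R ∧ R.card ≤ r := by
  classical
  obtain ⟨L, hnd, hfs, h⟩ := hC {i} (by simp)
  have hlen : L.length = 1 := by
    have := List.toFinset_card_of_nodup hnd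
    rw [hfs] at this
    simpa using this.symm
  have h0 : (0 : ℕ) < L.length := by omega
  obtain ⟨R, hR, hRc, -⟩ := h (Fin.mk 0 h0)
  have : L.get ⟨0, h0⟩ = i := by
    have := List.mem_toFinset.mpr (L.get_mem ⟨0, h0⟩)
    rw [hfs] at this
    simpa using this
  exact ⟨R, this ▸ hR, hRc⟩

lemma slrc_pair {F : Type*} [Field F] {n r : ℕ} {C : Submodule F (Fin n → F)}
    (hC : IsSLRC C r 2) {i j : Fin n} (hij : i ≠ j) :
    ∃ i0 ∈ ({i, j} : Finset (Fin n)), ∃ R, IsRecoveringSet C i0 R ∧ R.card ≤ r ∧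
      ∀ m ∈ ({i, j} : Finset (Fin n)), m ∉ R := by
  classical
  obtain ⟨L, hnd, hfs, h⟩ := hC {i, j} (by rw [Finset.card_insert_of_notMem (by simpa using hij)]; simp)
  have h0 : (0 : ℕ) < L.length := by
    have := List.toFinset_card_of_nodup hnd
    rw [hfs, Finset.card_insert_of_notMem (by simpa using hij)] at this
    simp at this; omega
  obtain ⟨R, hR, hRc, hRsub⟩ := h (Fin.mk 0 h0)
  refine ⟨L.get ⟨0, h0⟩, ?_, R, hR, hRc, ?_⟩
  · have := List.mem_toFinset.mpr (L.get_mem ⟨0, h0⟩)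
    rwa [hfs] at this
  · intro m hm hmR
    have := hRsub hmR
    simp only [List.take_zero, List.toFinset_nil, Finset.union_empty,
      Finset.mem_union, Finset.mem_compl] at this
    exact this hm

lemma dual_of_rec {F : Type*} [Field F] {n : ℕ} {C : Submodule F (Fin n → F)}
    {i : Fin n} {R : Finset (Fin n)} (h : IsRecoveringSet C i R) :
    ∃ v : Fin n → F, (∀ x ∈ C, ∑ m, v m * x m = 0) ∧ v i = -1 ∧
      ∀ m, m ≠ i → m ∉ R → v m = 0 := by
  classical
  obtain ⟨hiR, a, ha, hax⟩ := h
  refine ⟨fun m => if m = i then -1 else if m ∈ R then a m else 0, ?_, by simp, ?_⟩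
  · intro x hx
    have hsub : ∀ m ∈ (univ : Finset (Fin n)), m ∉ insert i R →
        (if m = i then (-1:F) else if m ∈ R then a m else 0) * x m = 0 := by
      intro m _ hm
      simp only [Finset.mem_insert, not_or] at hm
      simp [hm.1, hm.2]
    rw [← Finset.sum_subset (Finset.subset_univ (insert i R)) hsub,
      Finset.sum_insert hiR]
    have : ∑ m ∈ R, (if m = i then (-1:F) else if m ∈ R then a m else 0) * x m
        = ∑ m ∈ R, a m * x m := by
      refine Finset.sum_congr rfl fun m hm => ?_
      have : m ≠ i := fun e => hiR (e ▸ hm)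
      simp [this, hm]
    rw [this, ← hax x hx]
    simp
  · intro m hmi hmR
    simp [hmi, hmR]

set_option maxHeartbeats 1000000 in
theorem rate_bound_t2 {F : Type*} [Field F] [Fintype F] {n k r : ℕ}
    (C : Submodule F (Fin n → F)) (hk : Module.finrank F C = k)
    (hr2 : 2 ≤ r) (hrk : r < k) (hC : IsSLRC C r 2) :
    (k : ℝ) / n ≤ (r : ℝ) / (r + 2) ∧ (k : ℝ) + 2 * k / r ≤ n := by
  classical
  set D := (dotB F n).orthogonal C with hD
  have hmemD : ∀ v : Fin n → F, (∀ x ∈ C, ∑ m, v m * x m = 0) → v ∈ D := by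
    intro v hv x hx
    show dotB F n x v = 0
    rw [dotB_apply]
    rw [← hv x hx]
    exact Finset.sum_congr rfl fun m _ => mul_comm _ _
  set T : Set (Fin n → F) :=
    {v | v ∈ D ∧ (univ.filter fun j => v j ≠ 0).card ≤ r + 1} with hT
  -- membership in T from a recovering set
  have hmk : ∀ (i : Fin n) (R : Finset (Fin n)), IsRecoveringSet C i R → R.card ≤ r →
      ∃ v ∈ T, v i ≠ 0 ∧ ∀ m, m ≠ i → m ∉ R → v m = 0 := by
    intro i R hR hRc
    obtain ⟨v, hv1, hv2, hv3⟩ := dual_of_rec hR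
    refine ⟨v, ⟨hmemD v hv1, ?_⟩, by simp [hv2], hv3⟩
    calc (univ.filter fun j => v j ≠ 0).card
        ≤ (insert i R).card := by
          apply Finset.card_le_card
          intro m hm
          simp only [Finset.mem_filter] at hm
          by_contra hmem
          simp only [Finset.mem_insert, not_or] at hmem
          exact hm.2 (hv3 m hmem.1 hmem.2)
      _ ≤ R.card + 1 := Finset.card_insert_le _ _
      _ ≤ r + 1 := by omega
  have hcov : ∀ i : Fin n, ∃ v ∈ T, v i ≠ 0 := by
    intro i
    obtain ⟨R, hR, hRc⟩ := slrc_single hC i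
    obtain ⟨v, hvT, hvi, -⟩ := hmk i R hR hRc
    exact ⟨v, hvT, hvi⟩
  have hpair : ∀ i j : Fin n, i ≠ j →
      ∃ v ∈ T, (v i ≠ 0 ∧ v j = 0) ∨ (v j ≠ 0 ∧ v i = 0) := by
    intro i j hij
    obtain ⟨i0, hi0, R, hR, hRc, hRE⟩ := slrc_pair hC hij
    obtain ⟨v, hvT, hvi0, hvz⟩ := hmk i0 R hR hRc
    rcases Finset.mem_insert.1 hi0 with h | h
    · subst h
      refine ⟨v, hvT, Or.inl ⟨hvi0, hvz j (Ne.symm hij) (hRE j (by simp))⟩⟩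
    · rw [Finset.mem_singleton] at h
      subst h
      refine ⟨v, hvT, Or.inr ⟨hvi0, hvz i hij (hRE i (by simp))⟩⟩
  -- extract a linearly independent spanning subset of T
  obtain ⟨b, hbT, hspan, hli⟩ := exists_linearIndependent F T
  have hbfin : b.Finite := hli.setFinite
  letI : Fintype b := hbfin.fintype
  set Bf : Finset (Fin n → F) := b.toFinset with hBf
  have hBfb : (Bf : Set (Fin n → F)) = b := Set.coe_toFinset b
  have hBfT : ∀ c ∈ Bf, c ∈ T := by
    intro c hc
    exact hbT (by rwa [hBf, Set.mem_toFinset] at hc)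
  have memspan : ∀ v ∈ T, v ∈ Submodule.span F (Bf : Set (Fin n → F)) := by
    intro v hv
    rw [hBfb, hspan]
    exact Submodule.subset_span hv
  set deg : Fin n → ℕ := fun i => (Bf.filter fun c => c i ≠ 0).card with hdeg
  have hdeg1 : ∀ i, 1 ≤ deg i := by
    intro i
    obtain ⟨v, hvT, hvi⟩ := hcov i
    have hstep : (Bf.filter fun c => c i ≠ 0).Nonempty → 1 ≤ deg i :=
      fun h => Finset.card_pos.2 h
    apply hstep
    by_contra hne
    rw [Finset.not_nonempty_iff_eq_empty, Finset.filter_eq_empty_iff] at hne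
    have hsp : Submodule.span F (Bf : Set (Fin n → F)) ≤ LinearMap.ker (LinearMap.proj i) := by
      rw [Submodule.span_le]
      intro c hc
      rw [SetLike.mem_coe, LinearMap.mem_ker]
      have := hne (Finset.mem_coe.1 hc)
      simpa using this
    have := hsp (memspan v hvT)
    rw [LinearMap.mem_ker] at this
    exact hvi this
  -- each row of the basis has at most one degree-one coordinate
  have hrow : ∀ c ∈ Bf, (univ.filter fun i => c i ≠ 0 ∧ deg i = 1).card ≤ 1 := by
    intro c hc
    rw [Finset.card_le_one]
    intro i hi j hj
    by_contra hne
    simp only [Finset.mem_filter] at hi hj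
    obtain ⟨-, hci, hdi⟩ := hi
    obtain ⟨-, hcj, hdj⟩ := hj
    obtain ⟨v, hvT, hcase⟩ := hpair i j hne
    obtain ⟨μ, -, hμ⟩ := Submodule.mem_span_finset.1 (memspan v hvT)
    have huniq : ∀ (m : Fin n), c m ≠ 0 → deg m = 1 → ∀ c' ∈ Bf, c' ≠ c → c' m = 0 := by
      intro m hcm hdm c' hc' hne'
      by_contra h0
      have h2 : 1 < (Bf.filter fun c'' => c'' m ≠ 0).card :=
        Finset.one_lt_card.2 ⟨c, Finset.mem_filter.2 ⟨hc, hcm⟩, c',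
          Finset.mem_filter.2 ⟨hc', h0⟩, Ne.symm hne'⟩
      have h2' : 1 < deg m := h2
      rw [hdm] at h2'
      exact lt_irrefl 1 h2' 
    have hvim : ∀ (m : Fin n), c m ≠ 0 → deg m = 1 → v m = μ c * c m := by
      intro m hcm hdm
      have : v m = ∑ c' ∈ Bf, μ c' * c' m := by
        rw [← hμ]
        rw [Finset.sum_apply]
        rfl
      rw [this]
      exact Finset.sum_eq_single c (fun c' hc' hne' => by
        rw [huniq m hcm hdm c' hc' hne', mul_zero]) (fun h => absurd hc h)
    have hvi := hvim i hci hdi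
    have hvj := hvim j hcj hdj
    rcases hcase with ⟨h1, h2⟩ | ⟨h1, h2⟩
    · have hμc : μ c ≠ 0 := fun h => h1 (by rw [hvi, h, zero_mul])
      rw [hvj] at h2
      exact mul_ne_zero hμc hcj h2
    · have hμc : μ c ≠ 0 := fun h => h1 (by rw [hvj, h, zero_mul])
      rw [hvi] at h2
      exact mul_ne_zero hμc hci h2
  -- double counting
  have hwt : ∀ c ∈ Bf, (univ.filter fun i => c i ≠ 0).card ≤ r + 1 := fun c hc => (hBfT c hc).2
  have hexch : ∑ i, deg i = ∑ c ∈ Bf, (univ.filter fun i => c i ≠ 0).card := by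
    show ∑ i, (Bf.filter fun c => c i ≠ 0).card = _
    simp_rw [Finset.card_filter]
    exact Finset.sum_comm
  have hsum1 : ∑ i, deg i ≤ Bf.card * (r + 1) := by
    rw [hexch]
    calc ∑ c ∈ Bf, (univ.filter fun i => c i ≠ 0).card ≤ ∑ _c ∈ Bf, (r+1) :=
        Finset.sum_le_sum hwt
      _ = Bf.card * (r+1) := by rw [Finset.sum_const, smul_eq_mul]
  set A1 : Finset (Fin n) := univ.filter fun i => deg i = 1 with hA1def
  have hA1 : A1.card ≤ Bf.card := by
    have key : ∑ c ∈ Bf, (univ.filter fun i => c i ≠ 0 ∧ deg i = 1).card = A1.card := by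
      simp_rw [Finset.card_filter]
      rw [Finset.sum_comm, hA1def, Finset.card_filter]
      refine Finset.sum_congr rfl fun i _ => ?_
      by_cases hdi : deg i = 1
      · simp only [hdi, and_true, if_true]
        rw [← Finset.card_filter]
        exact hdi
      · simp [hdi]
    calc A1.card = ∑ c ∈ Bf, (univ.filter fun i => c i ≠ 0 ∧ deg i = 1).card := key.symm
      _ ≤ ∑ _c ∈ Bf, 1 := Finset.sum_le_sum (fun c hc => hrow c hc)
      _ = Bf.card := by simp
  have hlow : 2 * n ≤ (∑ i, deg i) + A1.card := by
    have hA1c : A1.card = ∑ i, (if deg i = 1 then 1 else 0) := by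
      rw [hA1def, Finset.card_filter]
    rw [hA1c, ← Finset.sum_add_distrib]
    calc 2 * n = ∑ _i : Fin n, 2 := by simp [Finset.sum_const, Fintype.card_fin, mul_comm]
      _ ≤ ∑ i, (deg i + if deg i = 1 then 1 else 0) := by
        refine Finset.sum_le_sum fun i _ => ?_
        have h1 := hdeg1 i
        by_cases h : deg i = 1
        · simp [h]
        · simp only [h, if_false, add_zero]
          exact Nat.lt_of_le_of_ne h1 (Ne.symm h)
  have hmain : 2 * n ≤ Bf.card * (r + 2) := by
    calc 2*n ≤ (∑ i, deg i) + A1.card := hlow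
      _ ≤ Bf.card * (r+1) + Bf.card := Nat.add_le_add hsum1 hA1
      _ = Bf.card * (r+2) := by ring
  -- dimension bound
  have hTD : T ⊆ (D : Set (Fin n → F)) := fun v hv => hv.1
  have hspD : Submodule.span F (Bf : Set (Fin n → F)) ≤ D := by
    rw [hBfb, Submodule.span_le]
    exact hbT.trans hTD
  have hcardBf : Bf.card = finrank F (Submodule.span F (Bf : Set (Fin n → F))) := by
    rw [hBfb]
    exact (finrank_span_set_eq_card hli).symm
  have hfinD : finrank F D = n - k := by
    rw [hD, LinearMap.BilinForm.finrank_orthogonal dotB_nondeg, hk,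
      Module.finrank_fin_fun]
  have hsle : Bf.card ≤ n - k := by
    rw [hcardBf, ← hfinD]
    exact Submodule.finrank_mono hspD
  have hkn : k ≤ n := by
    rw [← hk]
    have := Submodule.finrank_le C
    rwa [Module.finrank_fin_fun] at this
  have hsk : Bf.card + k ≤ n := by
    calc Bf.card + k ≤ (n - k) + k := Nat.add_le_add_right hsle k
      _ = n := Nat.sub_add_cancel hkn
  have hn0 : 0 < n := lt_of_lt_of_le (lt_of_le_of_lt (Nat.zero_le r) hrk) hkn
  have key : (r + 2) * k ≤ r * n := by
    have h3 : (Bf.card + k) * (r+2) ≤ n * (r+2) := Nat.mul_le_mul_right _ hsk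
    have h4 : k*(r+2) + 2*n ≤ n*r + 2*n := by
      calc k*(r+2) + 2*n ≤ k*(r+2) + Bf.card*(r+2) := Nat.add_le_add_left hmain _
        _ = (Bf.card + k)*(r+2) := by ring
        _ ≤ n * (r+2) := h3
        _ = n*r + 2*n := by ring
    calc (r+2)*k = k*(r+2) := Nat.mul_comm _ _
      _ ≤ n*r := Nat.le_of_add_le_add_right h4
      _ = r*n := Nat.mul_comm n r
  have keyR : ((r:ℝ) + 2) * k ≤ r * n := by exact_mod_cast key
  have hr0 : (0:ℝ) < r := by exact_mod_cast (lt_of_lt_of_le Nat.zero_lt_two hr2)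
  have hn0R : (0:ℝ) < n := by exact_mod_cast hn0
  constructor
  · rw [div_le_div_iff₀ hn0R (by positivity)]
    nlinarith [keyR]
  · have h2 : 2*(k:ℝ)/r ≤ (n:ℝ) - k := by
      rw [div_le_iff₀ hr0]
      nlinarith [keyR]
    linarith
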